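/- Let L be a finite modular non-distributive lattice. Then L has a sublattice L' isomorphic to the diamond M₃ such that rank(max L') − rank(min L') = 2, i.e., the three middle elements of L' each cover min L' and are covered by max L'. -/

import Mathlib

set_option linter.unusedSectionVars false
set_option linter.unreachableTactic false
set_option linter.unusedTactic false

section DiamondAux

variable {L : Type*} [Lattice L] [IsModularLattice L]

/-! ### Height lemmas in a finite order -/

lemma myHeightNeTop [Fintype L] (x : L) : Order.height x ≠ ⊤ := by
  intro h
  obtain ⟨p, -, hlen⟩ := Order.height_eq_top_iff.mp h (Fintype.card L)
  exact absurd (hlen ▸ p.length_lt_card) (by omega)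

lemma myExistsCovByBetween [Fintype L] {c b : L} (h : c < b) : ∃ m, c ≤ m ∧ m ⋖ b := by
  obtain ⟨m, ⟨hcm, hmb⟩, hmax⟩ := Set.Finite.exists_maximalFor id {t : L | c ≤ t ∧ t < b}
    (Set.toFinite _) ⟨c, le_rfl, h⟩
  refine ⟨m, hcm, hmb, fun t hmt htb => ?_⟩
  exact not_le_of_gt hmt (hmax ⟨hcm.trans hmt.le, htb⟩ hmt.le)

/-- In a finite modular lattice, a covering step increases the height by exactly one. -/
lemma myCovByHeight [Fintype L] : ∀ n : ℕ, ∀ a b : L, Order.height b = n → a ⋖ b →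
    Order.height b = Order.height a + 1 := by
  intro n
  induction n using Nat.strong_induction_on with
  | _ n IH =>
  intro a b hb hab
  have hfa : Order.height a < ⊤ := lt_top_iff_ne_top.mpr (myHeightNeTop a)
  set na := (Order.height a).toNat with hnadef
  have hna : (na : ℕ∞) = Order.height a := ENat.coe_toNat (myHeightNeTop a)
  have hlt : (na : ℕ∞) < Order.height b := by
    rw [hna]; exact Order.height_strictMono hab.lt hfa
  have hnan : na < n := by rw [hb] at hlt; exact_mod_cast hlt
  obtain ⟨p, hplast, hplen⟩ := Order.exists_series_of_height_eq_coe b hb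
  have hn1 : 1 ≤ n := by omega
  have hc0 : p.eraseLast.last < b := hplast ▸ p.eraseLast_last_rel_last (by omega)
  have hc0h : ((n - 1 : ℕ) : ℕ∞) ≤ Order.height p.eraseLast.last := by
    have := Order.length_le_height_last (p := p.eraseLast)
    simpa [hplen] using this
  obtain ⟨m, hc0m, hmb⟩ := myExistsCovByBetween hc0
  have hmh : Order.height m = ((n - 1 : ℕ) : ℕ∞) := by
    have hnm : ((Order.height m).toNat : ℕ∞) = Order.height m := ENat.coe_toNat (myHeightNeTop m)
    set nm := (Order.height m).toNat
    have h1 : ((n-1 : ℕ) : ℕ∞) ≤ (nm : ℕ∞) := by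
      rw [hnm]; exact hc0h.trans (Order.height_mono hc0m)
    have h2 : (nm : ℕ∞) < (n : ℕ∞) := by
      rw [hnm, ← hb]
      exact Order.height_strictMono hmb.lt (lt_top_iff_ne_top.mpr (myHeightNeTop m))
    have h1' : (n-1 : ℕ) ≤ nm := by exact_mod_cast h1
    have h2' : nm < n := by exact_mod_cast h2
    rw [← hnm]
    norm_cast
    omega
  have hb' : Order.height b = Order.height m + 1 := by
    rw [hb, hmh]
    norm_cast
    omega
  by_cases hma : m = a
  · rw [hb', hma]
  · have hsup : a ⊔ m = b := by
      rcases hab.eq_or_eq le_sup_left (sup_le hab.le hmb.le) with h | h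
      · exfalso
        have hm_le : m ≤ a := le_sup_right.trans h.le
        rcases hmb.eq_or_eq hm_le hab.le with h' | h'
        · exact hma h'.symm
        · exact hab.lt.ne h'
      · exact h
    have hcov1 : a ⊓ m ⋖ m := inf_covBy_of_covBy_sup_left (by rw [hsup]; exact hab)
    have hcov2 : m ⊓ a ⋖ a := inf_covBy_of_covBy_sup_left (by rw [sup_comm, hsup]; exact hmb)
    have h1 := IH (n-1) (by omega) (a ⊓ m) m hmh hcov1
    have h2 := IH na hnan (m ⊓ a) a hna.symm hcov2
    rw [inf_comm] at h2
    rw [hb', h1, ← h2]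

/-! ### Diamonds -/

def MyDiamond (e x y z f : L) : Prop :=
  x ⊓ y = e ∧ x ⊓ z = e ∧ y ⊓ z = e ∧ x ⊔ y = f ∧ x ⊔ z = f ∧ y ⊔ z = f ∧ e ≠ f

lemma MyDiamond.rotate {e x y z f : L} (D : MyDiamond e x y z f) : MyDiamond e y z x f := by
  obtain ⟨ixy, ixz, iyz, sxy, sxz, syz, hef⟩ := D
  exact ⟨iyz, by rw [inf_comm]; exact ixy, by rw [inf_comm]; exact ixz,
    syz, by rw [sup_comm]; exact sxy, by rw [sup_comm]; exact sxz, hef⟩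

lemma MyDiamond.swap {e x y z f : L} (D : MyDiamond e x y z f) : MyDiamond e y x z f := by
  obtain ⟨ixy, ixz, iyz, sxy, sxz, syz, hef⟩ := D
  exact ⟨by rw [inf_comm]; exact ixy, iyz, ixz, by rw [sup_comm]; exact sxy, syz, sxz, hef⟩

lemma MyDiamond.ne_e {e x y z f : L} (D : MyDiamond e x y z f) : x ≠ e := by
  obtain ⟨ixy, ixz, iyz, sxy, sxz, syz, hef⟩ := D
  intro hx
  have hey : e ≤ y := ixy ▸ inf_le_right
  have hyf : y = f := by rw [← sxy, hx, sup_eq_right.mpr hey]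
  have hzf : z ≤ f := syz ▸ le_sup_right
  have hze : z = e := by rw [← iyz, hyf, inf_eq_right.mpr hzf]
  apply hef
  rw [← sxz, hx, hze, sup_idem]

lemma MyDiamond.ne_f {e x y z f : L} (D : MyDiamond e x y z f) : x ≠ f := by
  intro hx
  have hyf : y ≤ f := D.2.2.2.1 ▸ le_sup_right
  exact D.rotate.ne_e (by rw [← D.1, hx, inf_eq_right.mpr hyf])

lemma MyDiamond.lt_e {e x y z f : L} (D : MyDiamond e x y z f) : e < x :=
  lt_of_le_of_ne (D.1 ▸ inf_le_left) (Ne.symm D.ne_e)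

lemma MyDiamond.lt_f {e x y z f : L} (D : MyDiamond e x y z f) : x < f :=
  lt_of_le_of_ne (D.2.2.2.1 ▸ le_sup_left) D.ne_f

lemma MyDiamond.not_le {e x y z f : L} (D : MyDiamond e x y z f) : ¬ x ≤ y := fun h =>
  D.ne_e (by rw [← D.1, inf_eq_left.mpr h])

/-- Left shrink: given `e < a < x`, produce a smaller diamond with the same bottom. -/
lemma MyDiamond.shrink_left {e x y z f a : L} (D : MyDiamond e x y z f)
    (hea : e < a) (hax : a < x) :
    MyDiamond e a ((a ⊔ y) ⊓ z) ((a ⊔ z) ⊓ y) ((a ⊔ y) ⊓ (a ⊔ z)) ∧ (a ⊔ y) ⊓ (a ⊔ z) < f := by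
  obtain ⟨ixy, ixz, iyz, sxy, sxz, syz, hef⟩ := D
  have hey : e ≤ y := ixy ▸ inf_le_right
  have hez : e ≤ z := iyz ▸ inf_le_right
  have hxf : x ≤ f := sxy ▸ le_sup_left
  have hyf : y ≤ f := sxy ▸ le_sup_right
  have hzf : z ≤ f := sxz ▸ le_sup_right
  have hay : a ⊓ y = e :=
    le_antisymm (le_trans (inf_le_inf_right y hax.le) ixy.le) (le_inf hea.le hey)
  have haz : a ⊓ z = e :=
    le_antisymm (le_trans (inf_le_inf_right z hax.le) ixz.le) (le_inf hea.le hez)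
  have i1 : a ⊓ ((a ⊔ y) ⊓ z) = e := by
    rw [← inf_assoc, inf_eq_left.mpr (le_sup_left : a ≤ a ⊔ y), haz]
  have i2 : a ⊓ ((a ⊔ z) ⊓ y) = e := by
    rw [← inf_assoc, inf_eq_left.mpr (le_sup_left : a ≤ a ⊔ z), hay]
  have i3 : ((a ⊔ y) ⊓ z) ⊓ ((a ⊔ z) ⊓ y) = e := by
    apply le_antisymm
    · calc ((a ⊔ y) ⊓ z) ⊓ ((a ⊔ z) ⊓ y) ≤ z ⊓ y :=
            inf_le_inf inf_le_right inf_le_right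
        _ = e := by rw [inf_comm]; exact iyz
    · exact le_inf (le_inf (hea.le.trans le_sup_left) hez)
        (le_inf (hea.le.trans le_sup_left) hey)
  have s1 : a ⊔ ((a ⊔ y) ⊓ z) = (a ⊔ y) ⊓ (a ⊔ z) := by
    rw [sup_comm, inf_sup_assoc_of_le z (le_sup_left : a ≤ a ⊔ y), sup_comm z a]
  have s2 : a ⊔ ((a ⊔ z) ⊓ y) = (a ⊔ y) ⊓ (a ⊔ z) := by
    rw [sup_comm, inf_sup_assoc_of_le y (le_sup_left : a ≤ a ⊔ z), sup_comm y a,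
      inf_comm]
  have hyy' : y ⊔ ((a ⊔ y) ⊓ z) = a ⊔ y := by
    rw [sup_comm, inf_sup_assoc_of_le z (le_sup_right : y ≤ a ⊔ y), sup_comm z y, syz,
      inf_eq_left.mpr (sup_le (hax.le.trans hxf) hyf)]
  have s3 : ((a ⊔ y) ⊓ z) ⊔ ((a ⊔ z) ⊓ y) = (a ⊔ y) ⊓ (a ⊔ z) := by
    rw [sup_comm, inf_sup_assoc_of_le y (inf_le_right.trans le_sup_right :
      (a ⊔ y) ⊓ z ≤ a ⊔ z), hyy', inf_comm]
  have haf' : a ≤ (a ⊔ y) ⊓ (a ⊔ z) := le_inf le_sup_left le_sup_left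
  have hazf : a ⊔ z < f := by
    rcases lt_or_eq_of_le (sup_le (hax.le.trans hxf) hzf) with h | h
    · exact h
    · exfalso
      have : x = a := by
        have hx : x ⊓ (a ⊔ z) = x := by rw [h, inf_eq_left.mpr hxf]
        rw [inf_comm, sup_inf_assoc_of_le z hax.le, inf_comm z x, ixz,
          sup_eq_left.mpr hea.le] at hx
        exact hx.symm
      exact hax.ne' this
  exact ⟨⟨i1, i2, i3, s1, s2, s3, fun h => hea.ne (le_antisymm hea.le (h ▸ haf'))⟩,
    lt_of_le_of_lt inf_le_right hazf⟩

/-- Right shrink: given `x < b < f`, produce a smaller diamond with the same top. -/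
lemma MyDiamond.shrink_right {e x y z f b : L} (D : MyDiamond e x y z f)
    (hxb : x < b) (hbf : b < f) :
    MyDiamond ((b ⊓ y) ⊔ (b ⊓ z)) b ((b ⊓ y) ⊔ z) ((b ⊓ z) ⊔ y) f ∧ e < (b ⊓ y) ⊔ (b ⊓ z) := by
  obtain ⟨ixy, ixz, iyz, sxy, sxz, syz, hef⟩ := D
  have hey : e ≤ y := ixy ▸ inf_le_right
  have hez : e ≤ z := iyz ▸ inf_le_right
  have heb : e ≤ b := (ixy ▸ inf_le_left : e ≤ x).trans hxb.le
  have hyf : y ≤ f := sxy ▸ le_sup_right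
  have hzf : z ≤ f := sxz ▸ le_sup_right
  have hby : b ⊔ y = f := le_antisymm (sup_le hbf.le hyf) (sxy ▸ sup_le_sup_right hxb.le y)
  have hbz : b ⊔ z = f := le_antisymm (sup_le hbf.le hzf) (sxz ▸ sup_le_sup_right hxb.le z)
  have j1 : b ⊔ ((b ⊓ y) ⊔ z) = f := by rw [← sup_assoc, sup_inf_self, hbz]
  have j2 : b ⊔ ((b ⊓ z) ⊔ y) = f := by rw [← sup_assoc, sup_inf_self, hby]
  have j3 : ((b ⊓ y) ⊔ z) ⊔ ((b ⊓ z) ⊔ y) = f := by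
    apply le_antisymm
    · exact sup_le (sup_le (inf_le_left.trans hbf.le) hzf)
        (sup_le (inf_le_left.trans hbf.le) hyf)
    · calc f = y ⊔ z := syz.symm
        _ ≤ ((b ⊓ y) ⊔ z) ⊔ ((b ⊓ z) ⊔ y) :=
          sup_le (le_sup_of_le_right le_sup_right) (le_sup_of_le_left le_sup_right)
  have m1 : b ⊓ ((b ⊓ y) ⊔ z) = (b ⊓ y) ⊔ (b ⊓ z) := by
    rw [inf_comm, sup_inf_assoc_of_le z (inf_le_left : b ⊓ y ≤ b), inf_comm z b]
  have m2 : b ⊓ ((b ⊓ z) ⊔ y) = (b ⊓ y) ⊔ (b ⊓ z) := by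
    rw [inf_comm, sup_inf_assoc_of_le y (inf_le_left : b ⊓ z ≤ b), inf_comm y b, sup_comm]
  have hyy' : y ⊓ ((b ⊓ y) ⊔ z) = b ⊓ y := by
    rw [inf_comm, sup_inf_assoc_of_le z (inf_le_right : b ⊓ y ≤ y), inf_comm z y, iyz,
      sup_eq_left.mpr (le_inf (heb) hey : e ≤ b ⊓ y)]
  have m3 : ((b ⊓ y) ⊔ z) ⊓ ((b ⊓ z) ⊔ y) = (b ⊓ y) ⊔ (b ⊓ z) := by
    rw [inf_comm, sup_inf_assoc_of_le y (le_sup_of_le_right inf_le_right :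
      b ⊓ z ≤ (b ⊓ y) ⊔ z), hyy', sup_comm]
  have he'b : (b ⊓ y) ⊔ (b ⊓ z) ≤ b := sup_le inf_le_left inf_le_left
  have hebz : e < b ⊓ z := by
    rcases lt_or_eq_of_le (le_inf heb hez) with h | h
    · exact h
    · exfalso
      have hex : e ≤ x := ixy ▸ inf_le_left
      have h1 : (b ⊓ z) ⊔ x = b := by
        rw [inf_sup_assoc_of_le z hxb.le, sup_comm z x, sxz, inf_eq_left.mpr hbf.le]
      have : x = b := by
        calc x = x ⊔ e := (sup_eq_left.mpr hex).symm
          _ = (b ⊓ z) ⊔ x := by rw [← h, sup_comm]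
          _ = b := h1
      exact hxb.ne this
  exact ⟨⟨m1, m2, m3, j1, j2, j3, fun h => (not_le_of_gt hbf) (h ▸ he'b)⟩,
    lt_of_lt_of_le hebz le_sup_right⟩

/-! ### The initial diamond from a non-distributive triple -/

def dE (a b c : L) : L := (a ⊓ b) ⊔ ((b ⊓ c) ⊔ (c ⊓ a))
def dF (a b c : L) : L := (a ⊔ b) ⊓ ((b ⊔ c) ⊓ (c ⊔ a))

lemma dE_swap (a b c : L) : dE a c b = dE a b c := by
  unfold dE; rw [inf_comm a c, inf_comm c b, inf_comm b a]; ac_rfl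

lemma dE_rot (a b c : L) : dE b c a = dE a b c := by
  unfold dE; ac_rfl

lemma dF_swap (a b c : L) : dF a c b = dF a b c := by
  unfold dF; rw [sup_comm a c, sup_comm c b, sup_comm b a]; ac_rfl

lemma dF_rot (a b c : L) : dF b c a = dF a b c := by
  unfold dF; ac_rfl

lemma ab_le_dE (a b c : L) : a ⊓ b ≤ dE a b c := le_sup_left

lemma ca_le_dE (a b c : L) : c ⊓ a ≤ dE a b c := le_sup_of_le_right le_sup_right

lemma dF_le_ab (a b c : L) : dF a b c ≤ a ⊔ b := inf_le_left

lemma dF_le_ca (a b c : L) : dF a b c ≤ c ⊔ a := inf_le_right.trans inf_le_right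

lemma dE_le_dF (a b c : L) : dE a b c ≤ dF a b c := by
  refine sup_le ?_ (sup_le ?_ ?_) <;> unfold dF <;>
    refine le_inf ?_ (le_inf ?_ ?_) <;>
    first
    | exact inf_le_left.trans le_sup_left
    | exact inf_le_left.trans le_sup_right
    | exact inf_le_right.trans le_sup_left
    | exact inf_le_right.trans le_sup_right

/-- The middle element in pre-modular form. -/
lemma dQ (a b c : L) : (b ⊓ dF a b c) ⊔ dE a b c = (b ⊓ (c ⊔ a)) ⊔ (c ⊓ a) := by
  have hbf : b ⊓ dF a b c = b ⊓ (c ⊔ a) := by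
    apply le_antisymm
    · exact inf_le_inf_left b (dF_le_ca a b c)
    · exact le_inf inf_le_left (le_inf (inf_le_left.trans le_sup_right)
        (le_inf (inf_le_left.trans le_sup_left) inf_le_right))
  rw [hbf]
  apply le_antisymm
  · refine sup_le le_sup_left (sup_le ?_ (sup_le ?_ le_sup_right))
    · exact le_sup_of_le_left (le_inf inf_le_right (inf_le_left.trans le_sup_right))
    · exact le_sup_of_le_left (le_inf inf_le_left (inf_le_right.trans le_sup_left))
  · exact sup_le le_sup_left (le_sup_of_le_right (ca_le_dE a b c))

/-- The middle element, modular (meet) form. -/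
lemma dQ' (a b c : L) : (b ⊓ dF a b c) ⊔ dE a b c = (b ⊔ (c ⊓ a)) ⊓ (c ⊔ a) := by
  rw [dQ, inf_comm b (c ⊔ a),
    inf_sup_assoc_of_le b (inf_le_left.trans le_sup_left : c ⊓ a ≤ c ⊔ a), inf_comm]

lemma key_inf (a b c : L) :
    ((a ⊓ dF a b c) ⊔ dE a b c) ⊓ ((b ⊓ dF a b c) ⊔ dE a b c) = dE a b c := by
  have heY : dE a b c ≤ (b ⊓ dF a b c) ⊔ dE a b c := le_sup_right
  have hYf : (b ⊓ dF a b c) ⊔ dE a b c ≤ dF a b c := sup_le inf_le_right (dE_le_dF a b c)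
  have stepA : ((a ⊓ dF a b c) ⊔ dE a b c) ⊓ ((b ⊓ dF a b c) ⊔ dE a b c)
      = dE a b c ⊔ ((a ⊓ dF a b c) ⊓ ((b ⊓ dF a b c) ⊔ dE a b c)) := by
    rw [sup_comm (a ⊓ dF a b c) (dE a b c), sup_inf_assoc_of_le (a ⊓ dF a b c) heY]
  have stepB : (a ⊓ dF a b c) ⊓ ((b ⊓ dF a b c) ⊔ dE a b c)
      = a ⊓ ((b ⊓ dF a b c) ⊔ dE a b c) := by
    rw [inf_assoc, inf_eq_right.mpr hYf]
  have stepE : a ⊓ ((b ⊓ dF a b c) ⊔ dE a b c) = a ⊓ (b ⊔ (c ⊓ a)) := by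
    rw [dQ' a b c, inf_comm (b ⊔ (c ⊓ a)) (c ⊔ a), ← inf_assoc,
      inf_eq_left.mpr (le_sup_right : a ≤ c ⊔ a)]
  have stepF : a ⊓ (b ⊔ (c ⊓ a)) ≤ dE a b c := by
    have hmod : ((c ⊓ a) ⊔ b) ⊓ a = (c ⊓ a) ⊔ (b ⊓ a) :=
      sup_inf_assoc_of_le b (inf_le_right : c ⊓ a ≤ a)
    rw [inf_comm, sup_comm b (c ⊓ a), hmod]
    exact sup_le (ca_le_dE a b c) (by rw [inf_comm]; exact ab_le_dE a b c)
  rw [stepA, stepB, stepE, sup_eq_left.mpr stepF]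

lemma key_sup (a b c : L) :
    ((a ⊓ dF a b c) ⊔ dE a b c) ⊔ ((b ⊓ dF a b c) ⊔ dE a b c) = dF a b c := by
  have hX : (a ⊓ dF a b c) ⊔ dE a b c = (a ⊔ dE a b c) ⊓ dF a b c := by
    rw [sup_comm (a ⊓ dF a b c) (dE a b c), ← sup_inf_assoc_of_le a (dE_le_dF a b c),
      sup_comm (dE a b c) a]
  have hYf : (b ⊓ dF a b c) ⊔ dE a b c ≤ dF a b c := sup_le inf_le_right (dE_le_dF a b c)
  have heY : dE a b c ≤ (b ⊓ dF a b c) ⊔ dE a b c := le_sup_right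
  have stepA : ((a ⊔ dE a b c) ⊓ dF a b c) ⊔ ((b ⊓ dF a b c) ⊔ dE a b c)
      = dF a b c ⊓ ((a ⊔ dE a b c) ⊔ ((b ⊓ dF a b c) ⊔ dE a b c)) := by
    rw [inf_comm (a ⊔ dE a b c) (dF a b c)]
    exact inf_sup_assoc_of_le (a ⊔ dE a b c) hYf
  have stepB : (a ⊔ dE a b c) ⊔ ((b ⊓ dF a b c) ⊔ dE a b c)
      = a ⊔ ((b ⊓ dF a b c) ⊔ dE a b c) := by
    rw [sup_assoc, sup_eq_right.mpr heY]
  have stepE : a ⊔ ((b ⊓ dF a b c) ⊔ dE a b c) = a ⊔ (b ⊓ (c ⊔ a)) := by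
    rw [dQ a b c, ← sup_assoc,
      sup_eq_left.mpr (inf_le_right.trans le_sup_left : c ⊓ a ≤ a ⊔ (b ⊓ (c ⊔ a)))]
  have stepF : dF a b c ≤ a ⊔ (b ⊓ (c ⊔ a)) := by
    have hmod : ((c ⊔ a) ⊓ b) ⊔ a = (c ⊔ a) ⊓ (b ⊔ a) :=
      inf_sup_assoc_of_le b (le_sup_right : a ≤ c ⊔ a)
    rw [sup_comm, inf_comm b (c ⊔ a), hmod]
    exact le_inf (dF_le_ca a b c) (by rw [sup_comm]; exact dF_le_ab a b c)
  rw [hX, stepA, stepB, stepE, inf_eq_left.mpr stepF]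

lemma key_ne {a b c : L} (h : a ⊓ (b ⊔ c) ≠ (a ⊓ b) ⊔ (a ⊓ c)) : dE a b c ≠ dF a b c := by
  intro he
  apply h
  apply le_antisymm
  · have h1 : a ⊓ (b ⊔ c) ≤ a ⊓ dF a b c := by
      refine le_inf inf_le_left (le_inf ?_ (le_inf inf_le_right ?_))
      · exact inf_le_left.trans le_sup_left
      · exact inf_le_left.trans le_sup_right
    rw [← he] at h1
    refine h1.trans ?_
    have hEform : dE a b c = ((a ⊓ b) ⊔ (c ⊓ a)) ⊔ (b ⊓ c) := by unfold dE; ac_rfl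
    have hmod : (((a ⊓ b) ⊔ (c ⊓ a)) ⊔ (b ⊓ c)) ⊓ a
        = ((a ⊓ b) ⊔ (c ⊓ a)) ⊔ ((b ⊓ c) ⊓ a) :=
      sup_inf_assoc_of_le (b ⊓ c) (sup_le inf_le_left inf_le_right)
    rw [inf_comm, hEform, hmod]
    refine sup_le (sup_le le_sup_left ?_) ?_
    · exact le_sup_of_le_right (by rw [inf_comm])
    · exact le_sup_of_le_right (le_inf inf_le_right (inf_le_left.trans inf_le_right))
  · exact sup_le (le_inf inf_le_left (inf_le_right.trans le_sup_left))
      (le_inf inf_le_left (inf_le_right.trans le_sup_right))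

end DiamondAux

theorem modular_nondistrib_has_rank_two_diamond {L : Type*} [Lattice L] [Fintype L]
    [IsModularLattice L]
    (hnd : ¬ ∀ x y z : L, x ⊓ (y ⊔ z) = (x ⊓ y) ⊔ (x ⊓ z)) :
    ∃ e x y z f : L, e < x ∧ x < f ∧ e < y ∧ y < f ∧ e < z ∧ z < f ∧
      x ≠ y ∧ x ≠ z ∧ y ≠ z ∧
      (¬ x ≤ y ∧ ¬ y ≤ x) ∧ (¬ x ≤ z ∧ ¬ z ≤ x) ∧ (¬ y ≤ z ∧ ¬ z ≤ y) ∧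
      x ⊔ y = f ∧ x ⊔ z = f ∧ y ⊔ z = f ∧
      x ⊓ y = e ∧ x ⊓ z = e ∧ y ⊓ z = e ∧
      Order.height f = Order.height e + 2 := by
  classical
  push_neg at hnd
  obtain ⟨a, b, c, habc⟩ := hnd
  have D0 : MyDiamond (dE a b c) ((a ⊓ dF a b c) ⊔ dE a b c) ((b ⊓ dF a b c) ⊔ dE a b c)
      ((c ⊓ dF a b c) ⊔ dE a b c) (dF a b c) := by
    refine ⟨key_inf a b c, ?_, ?_, key_sup a b c, ?_, ?_, key_ne habc⟩
    · have h := key_inf a c b; rw [dE_swap, dF_swap] at h; exact h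
    · have h := key_inf b c a; rw [dE_rot, dF_rot] at h; exact h
    · have h := key_sup a c b; rw [dE_swap, dF_swap] at h; exact h
    · have h := key_sup b c a; rw [dE_rot, dF_rot] at h; exact h
  have hPex : ∃ n : ℕ, ∃ e x y z f : L, MyDiamond e x y z f ∧
      Order.height f ≤ Order.height e + n := by
    refine ⟨(Order.height (dF a b c)).toNat, _, _, _, _, _, D0, ?_⟩
    rw [ENat.coe_toNat (myHeightNeTop _)]
    exact le_add_self
  set n := Nat.find hPex with hn
  obtain ⟨e, x, y, z, f, D, hhf⟩ := Nat.find_spec hPex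
  have hef : e < f := D.lt_e.trans D.lt_f
  have hn0 : n ≠ 0 := by
    intro h0
    rw [← hn, h0] at hhf
    simp only [Nat.cast_zero, add_zero] at hhf
    exact absurd hhf (not_le.mpr (Order.height_strictMono hef
      (lt_top_iff_ne_top.mpr (myHeightNeTop e))))
  have hcast : ((n - 1 : ℕ) : ℕ∞) + 1 = (n : ℕ∞) := by
    have h : n - 1 + 1 = n := by omega
    exact_mod_cast congrArg (Nat.cast : ℕ → ℕ∞) h
  have hcov1 : e ⋖ x := by
    by_contra hc
    obtain ⟨a', hea, hax⟩ := exists_lt_lt_of_not_covBy D.lt_e hc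
    obtain ⟨D', hf'⟩ := D.shrink_left hea hax
    apply Nat.find_min hPex (show n - 1 < n by omega)
    refine ⟨e, _, _, _, _, D', ?_⟩
    have h1 : Order.height ((a' ⊔ y) ⊓ (a' ⊔ z)) + 1 ≤ Order.height f :=
      (ENat.add_one_le_iff (myHeightNeTop _)).mpr (Order.height_strictMono hf'
        (lt_top_iff_ne_top.mpr (myHeightNeTop _)))
    have h2 : Order.height f ≤ (Order.height e + ((n - 1 : ℕ) : ℕ∞)) + 1 := by
      rw [add_assoc, hcast]
      exact hn ▸ hhf
    have h3 := h1.trans h2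
    exact (WithTop.add_le_add_iff_right (by simp : (1 : ℕ∞) ≠ ⊤)).mp h3
  have hcov2 : x ⋖ f := by
    by_contra hc
    obtain ⟨b', hxb, hbf⟩ := exists_lt_lt_of_not_covBy D.lt_f hc
    obtain ⟨D', he'⟩ := D.shrink_right hxb hbf
    apply Nat.find_min hPex (show n - 1 < n by omega)
    refine ⟨_, _, _, _, f, D', ?_⟩
    have h1 : Order.height e + 1 ≤ Order.height ((b' ⊓ y) ⊔ (b' ⊓ z)) :=
      (ENat.add_one_le_iff (myHeightNeTop _)).mpr (Order.height_strictMono he'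
        (lt_top_iff_ne_top.mpr (myHeightNeTop _)))
    calc Order.height f ≤ Order.height e + (n : ℕ∞) := hn ▸ hhf
      _ = (Order.height e + 1) + ((n - 1 : ℕ) : ℕ∞) := by
          rw [add_assoc, add_comm (1 : ℕ∞) _, hcast]
      _ ≤ Order.height ((b' ⊓ y) ⊔ (b' ⊓ z)) + ((n - 1 : ℕ) : ℕ∞) :=
          by gcongr
  have hx1 : Order.height x = Order.height e + 1 :=
    myCovByHeight (Order.height x).toNat e x (ENat.coe_toNat (myHeightNeTop x)).symm hcov1
  have hf1 : Order.height f = Order.height x + 1 :=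
    myCovByHeight (Order.height f).toNat x f (ENat.coe_toNat (myHeightNeTop f)).symm hcov2
  refine ⟨e, x, y, z, f, D.lt_e, D.lt_f, D.rotate.lt_e, D.rotate.lt_f,
    D.rotate.rotate.lt_e, D.rotate.rotate.lt_f,
    fun h => D.not_le h.le, fun h => D.rotate.rotate.swap.not_le h.le,
    fun h => D.rotate.not_le h.le,
    ⟨D.not_le, D.swap.not_le⟩,
    ⟨D.rotate.rotate.swap.not_le, D.rotate.rotate.not_le⟩,
    ⟨D.rotate.not_le, D.rotate.swap.not_le⟩,
    D.2.2.2.1, D.2.2.2.2.1, D.2.2.2.2.2.1, D.1, D.2.1, D.2.2.1, ?_⟩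
  rw [hf1, hx1, add_assoc, one_add_one_eq_two]
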